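/- Let H₀ ∈ (0,1), n ≥ 1, t > 0 and 1 ≤ r ≤ 2ⁿ. Define Γ^{H₀,n}_t(r) := ∫_{−4ⁿ}^{4ⁿ} |γ_t(ξ,r)|² / |ξ|^{2H₀−1} dξ, where |γ_t(ξ,r)|² = (1 − 2cos(ξt)e^{−r²t} + e^{−2r²t})/(r⁴+ξ²). Then Γ^{H₀,n}_t(r) ≥ c · (1/r^{4H₀}) (1 − 2e^{−t} + e^{−2t}) > 0, where c > 0 depends only on H₀. -/

import Mathlib

open MeasureTheory

noncomputable def gammaH (t ξ r : ℝ) : ℂ :=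
  Complex.exp (Complex.I * ξ * t) *
    ∫ s in (0:ℝ)..t, Complex.exp (-(s:ℂ) * (r:ℂ)^2) * Complex.exp (-Complex.I * ξ * s)

lemma cH_ne (r ξ : ℝ) (hr : 1 ≤ r) : (-(r:ℂ)^2 - Complex.I * ξ) ≠ 0 := by
  have hre : ((-(r:ℂ)^2 - Complex.I * ξ)).re = -r^2 := by
    simp [← Complex.ofReal_pow]
  intro h
  rw [h] at hre
  simp only [Complex.zero_re] at hre
  nlinarith

lemma gammaH_eq (t ξ r : ℝ) (hr : 1 ≤ r) :
    gammaH t ξ r = Complex.exp (Complex.I * ξ * t) *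
      ((Complex.exp ((-(r:ℂ)^2 - Complex.I * ξ) * t) - 1) / (-(r:ℂ)^2 - Complex.I * ξ)) := by
  unfold gammaH
  congr 1
  have key : ∀ s ∈ Set.uIcc (0:ℝ) t,
      Complex.exp (-(s:ℂ) * (r:ℂ)^2) * Complex.exp (-Complex.I * ξ * s)
        = Complex.exp ((-(r:ℂ)^2 - Complex.I * ξ) * s) := by
    intro s _
    rw [← Complex.exp_add]
    congr 1
    ring
  rw [intervalIntegral.integral_congr key, integral_exp_mul_complex (cH_ne r ξ hr)]
  norm_num

lemma gammaH_abs_sq (t ξ r : ℝ) (hr : 1 ≤ r) :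
    ‖gammaH t ξ r‖ ^ 2
      = ‖Complex.exp ((-(r:ℂ)^2 - Complex.I * ξ) * t) - 1‖ ^ 2 / (r^4 + ξ^2) := by
  rw [gammaH_eq t ξ r hr, norm_mul, norm_div]
  have h1 : ‖Complex.exp (Complex.I * ↑ξ * ↑t)‖ = 1 := by
    rw [Complex.norm_exp]; simp
  have h2 : ‖-(r:ℂ)^2 - Complex.I * ξ‖ ^ 2 = r^4 + ξ^2 := by
    rw [Complex.sq_norm, Complex.normSq_apply]
    simp only [Complex.sub_re, Complex.neg_re, Complex.sub_im, Complex.neg_im,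
      Complex.mul_re, Complex.mul_im, Complex.I_re, Complex.I_im, Complex.ofReal_re,
      Complex.ofReal_im, ← Complex.ofReal_pow]
    ring
  rw [h1, one_mul, div_pow, h2]

lemma abs_exp_ct (t ξ r : ℝ) :
    ‖Complex.exp ((-(r:ℂ)^2 - Complex.I * ξ) * t)‖ = Real.exp (-(r^2*t)) := by
  rw [Complex.norm_exp]
  congr 1
  simp only [Complex.mul_re, Complex.sub_re, Complex.neg_re, Complex.sub_im, Complex.neg_im,
    Complex.mul_im, Complex.I_re, Complex.I_im, Complex.ofReal_re, Complex.ofReal_im,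
    ← Complex.ofReal_pow]
  ring

lemma gammaH_sq_ge (t ξ r : ℝ) (hr : 1 ≤ r) (ht : 0 < t) :
    (1 - Real.exp (-t))^2 / (r^4 + ξ^2) ≤ ‖gammaH t ξ r‖ ^ 2 := by
  rw [gammaH_abs_sq t ξ r hr]
  have hden : (0:ℝ) < r^4 + ξ^2 := by positivity
  have h0 : (0:ℝ) ≤ 1 - Real.exp (-t) := by
    have : Real.exp (-t) ≤ Real.exp 0 := Real.exp_le_exp.2 (by linarith)
    rw [Real.exp_zero] at this
    linarith
  have habs : 1 - Real.exp (-t) ≤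
      ‖Complex.exp ((-(r:ℂ)^2 - Complex.I * ξ) * t) - 1‖ := by
    have hr2 : 1 ≤ r^2 := by nlinarith
    have hmono : Real.exp (-(r^2*t)) ≤ Real.exp (-t) :=
      Real.exp_le_exp.2 (by nlinarith [mul_le_mul_of_nonneg_right hr2 ht.le])
    have h := norm_sub_norm_le (1:ℂ) (Complex.exp ((-(r:ℂ)^2 - Complex.I * ξ) * t))
    rw [norm_sub_rev] at h
    simp only [norm_one, abs_exp_ct] at h
    linarith
  gcongr


lemma gammaH_sq_le (t ξ r : ℝ) (hr : 1 ≤ r) (ht : 0 ≤ t) :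
    ‖gammaH t ξ r‖ ^ 2 ≤ 4 := by
  rw [gammaH_abs_sq t ξ r hr]
  have h1 : (1:ℝ) ≤ r^4 + ξ^2 := by
    have hr4 := pow_le_pow_left₀ zero_le_one hr 4
    rw [one_pow] at hr4
    nlinarith [sq_nonneg ξ]
  have h2 : ‖Complex.exp ((-(r:ℂ)^2 - Complex.I * ξ) * t) - 1‖ ≤ 2 := by
    have h := norm_sub_le (Complex.exp ((-(r:ℂ)^2 - Complex.I * ξ) * t)) (1:ℂ)
    simp only [norm_one, abs_exp_ct] at h
    have : Real.exp (-(r^2*t)) ≤ Real.exp 0 := Real.exp_le_exp.2 (by nlinarith)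
    rw [Real.exp_zero] at this
    linarith
  calc ‖Complex.exp ((-(r:ℂ)^2 - Complex.I * ξ) * t) - 1‖ ^ 2 / (r^4 + ξ^2)
      ≤ 4 / (r^4 + ξ^2) := by
        gcongr
        nlinarith [norm_nonneg
          (Complex.exp ((-(r:ℂ)^2 - Complex.I * ξ) * t) - 1)]
    _ ≤ 4 := div_le_self (by norm_num) h1

lemma continuous_gammaH (t r : ℝ) (hr : 1 ≤ r) : Continuous fun ξ : ℝ => gammaH t ξ r := by
  have heq : (fun ξ : ℝ => gammaH t ξ r) = fun ξ : ℝ =>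
      Complex.exp (Complex.I * ξ * t) *
        ((Complex.exp ((-(r:ℂ)^2 - Complex.I * ξ) * t) - 1) / (-(r:ℂ)^2 - Complex.I * ξ)) :=
    funext fun ξ => gammaH_eq t ξ r hr
  rw [heq]
  apply Continuous.mul
  · fun_prop
  · exact Continuous.div (by fun_prop) (by fun_prop) (fun ξ => cH_ne r ξ hr)

lemma intervalIntegrable_abs_rpow {p : ℝ} (hp : -1 < p) (a b : ℝ) :
    IntervalIntegrable (fun x : ℝ => |x| ^ p) volume a b := by
  have h : ∀ c : ℝ, 0 ≤ c → IntervalIntegrable (fun x : ℝ => |x| ^ p) volume 0 c := by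
    intro c hc
    have hi := intervalIntegral.intervalIntegrable_rpow' (a := 0) (b := c) hp
    rw [intervalIntegrable_iff, Set.uIoc_of_le hc] at hi ⊢
    apply hi.congr_fun ?_ measurableSet_Ioc
    intro x hx
    simp [abs_of_nonneg hx.1.le]
  have h' : ∀ c : ℝ, IntervalIntegrable (fun x : ℝ => |x| ^ p) volume 0 c := by
    intro c
    rcases le_total 0 c with hc | hc
    · exact h c hc
    · rw [IntervalIntegrable.iff_comp_neg]
      simpa [abs_neg] using h (-c) (by linarith)
  exact (h' a).symm.trans (h' b)

lemma integral_abs_rpow {p : ℝ} (hp : -1 < p) {a : ℝ} (ha : 0 ≤ a) :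
    ∫ x in (-a)..a, |x| ^ p = 2 * (a ^ (p+1) / (p+1)) := by
  have hp1 : (0:ℝ) < p + 1 := by linarith
  have h1 : ∫ x in (0:ℝ)..a, |x| ^ p = a ^ (p+1) / (p+1) := by
    rw [intervalIntegral.integral_congr (g := fun x : ℝ => x ^ p) ?_]
    · rw [integral_rpow (Or.inl hp), Real.zero_rpow (by linarith : p + 1 ≠ 0)]
      ring
    · intro x hx
      rw [Set.uIcc_of_le ha] at hx
      simp [abs_of_nonneg hx.1]
  have h2 : ∫ x in (-a)..(0:ℝ), |x| ^ p = a ^ (p+1) / (p+1) := by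
    have hcomp := intervalIntegral.integral_comp_neg (a := (0:ℝ)) (b := a) (fun x : ℝ => |x| ^ p)
    simp only [abs_neg, neg_zero] at hcomp
    rw [← hcomp, h1]
  rw [← intervalIntegral.integral_add_adjacent_intervals
      (intervalIntegrable_abs_rpow hp (-a) 0) (intervalIntegrable_abs_rpow hp 0 a), h1, h2]
  ring

theorem stmt17 (H₀ : ℝ) (hH : H₀ ∈ Set.Ioo (0:ℝ) 1) :
    ∃ c : ℝ, 0 < c ∧ ∀ n : ℕ, 1 ≤ n → ∀ t : ℝ, 0 < t → ∀ r : ℝ, 1 ≤ r → r ≤ (2:ℝ)^n →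
      (c * (1 / r ^ (4*H₀)) * (1 - 2*Real.exp (-t) + Real.exp (-2*t)) ≤
        ∫ ξ in (-(4:ℝ)^n)..((4:ℝ)^n), ‖gammaH t ξ r‖^2 / |ξ| ^ (2*H₀ - 1))
      ∧ 0 < c * (1 / r ^ (4*H₀)) * (1 - 2*Real.exp (-t) + Real.exp (-2*t)) := by
  obtain ⟨hH0, hH1⟩ := hH
  have hp : (-1:ℝ) < 1 - 2*H₀ := by linarith
  refine ⟨1/(2*(1-H₀)), div_pos one_pos (by linarith), ?_⟩
  intro n hn t ht r hr hrn
  have hr0 : (0:ℝ) < r := by linarith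
  have hexp1 : Real.exp (-t) < 1 := by
    have := Real.exp_lt_exp.2 (show -t < 0 by linarith)
    rwa [Real.exp_zero] at this
  have hEeq : 1 - 2*Real.exp (-t) + Real.exp (-2*t) = (1 - Real.exp (-t))^2 := by
    rw [show (-2:ℝ)*t = -t + -t by ring, Real.exp_add]; ring
  have hKpos : (0:ℝ) < (1 - Real.exp (-t))^2 := pow_pos (by linarith) 2
  have hrpow : (0:ℝ) < r ^ (4*H₀) := Real.rpow_pos_of_pos hr0 _
  have hpos : 0 < 1/(2*(1-H₀)) * (1 / r ^ (4*H₀)) * (1 - 2*Real.exp (-t) + Real.exp (-2*t)) := by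
    rw [hEeq]
    have h1 : (0:ℝ) < 1/(2*(1-H₀)) := div_pos one_pos (by linarith)
    have h2 : (0:ℝ) < 1 / r ^ (4*H₀) := by positivity
    exact mul_pos (mul_pos h1 h2) hKpos
  refine ⟨?_, hpos⟩
  -- notation
  set K := (1 - Real.exp (-t))^2 with hK
  -- a.e. nonzero
  have h0ae : ∀ᵐ ξ : ℝ, ξ ≠ 0 := by
    rw [ae_iff]
    simp only [not_not]
    rw [Set.setOf_eq_eq_singleton]
    exact measure_singleton 0
  -- measurability of the integrand
  have hnum_cont : Continuous fun ξ : ℝ => ‖gammaH t ξ r‖ ^ 2 :=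
    (continuous_norm.comp (continuous_gammaH t r hr)).pow 2
  have hdae : (fun ξ : ℝ => |ξ| ^ (2*H₀-1))
      =ᵐ[volume] fun ξ => Real.exp (Real.log |ξ| * (2*H₀-1)) := by
    filter_upwards [h0ae] with ξ hξ
    rw [Real.rpow_def_of_pos (abs_pos.2 hξ)]
  have hdm : AEMeasurable (fun ξ : ℝ => |ξ| ^ (2*H₀-1)) volume :=
    (Measurable.aemeasurable
      (Real.measurable_exp.comp ((Real.measurable_log.comp continuous_abs.measurable).mul_const
        _))).congr hdae.symm
  have hfm : AEMeasurable (fun ξ : ℝ => ‖gammaH t ξ r‖ ^ 2 / |ξ| ^ (2*H₀-1))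
      volume := hnum_cont.measurable.aemeasurable.div hdm
  -- interval integrability of the integrand on any interval
  have hfint : ∀ u v : ℝ, IntervalIntegrable
      (fun ξ : ℝ => ‖gammaH t ξ r‖ ^ 2 / |ξ| ^ (2*H₀-1)) volume u v := by
    intro u v
    apply IntervalIntegrable.mono_fun ((intervalIntegrable_abs_rpow hp u v).const_mul 4)
    · exact hfm.aestronglyMeasurable.restrict
    · apply ae_restrict_of_ae
      filter_upwards [h0ae] with ξ hξ
      have hd : (0:ℝ) < |ξ| ^ (2*H₀-1) := Real.rpow_pos_of_pos (abs_pos.2 hξ) _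
      have hfnn : 0 ≤ ‖gammaH t ξ r‖ ^ 2 / |ξ| ^ (2*H₀-1) :=
        div_nonneg (sq_nonneg _) hd.le
      have hb : (0:ℝ) ≤ 4 * |ξ| ^ (1-2*H₀) := by positivity
      rw [Real.norm_eq_abs, Real.norm_eq_abs, abs_of_nonneg hfnn, abs_of_nonneg hb]
      calc ‖gammaH t ξ r‖ ^ 2 / |ξ| ^ (2*H₀-1)
          ≤ 4 / |ξ| ^ (2*H₀-1) := by
            gcongr
            exact gammaH_sq_le t ξ r hr ht.le
        _ = 4 * |ξ| ^ (1-2*H₀) := by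
            rw [div_eq_mul_inv, ← Real.rpow_neg (abs_nonneg ξ),
              (by ring : -(2*H₀-1) = 1-2*H₀)]
  -- restriction to [-r², r²]
  have hrA : r^2 ≤ (4:ℝ)^n := by
    have h2 : ((2:ℝ)^n)^2 = (4:ℝ)^n := by
      rw [← pow_mul, mul_comm, pow_mul]; norm_num
    calc r^2 ≤ ((2:ℝ)^n)^2 := pow_le_pow_left₀ hr0.le hrn 2
      _ = _ := h2
  have ha0 : (0:ℝ) ≤ r^2 := by positivity
  have step1 : (∫ ξ in (-(r^2))..(r^2), ‖gammaH t ξ r‖ ^ 2 / |ξ| ^ (2*H₀-1))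
      ≤ ∫ ξ in (-(4:ℝ)^n)..((4:ℝ)^n), ‖gammaH t ξ r‖ ^ 2 / |ξ| ^ (2*H₀-1) :=
    intervalIntegral.integral_mono_interval (by linarith) (by linarith) hrA
      (Filter.Eventually.of_forall fun ξ =>
        div_nonneg (sq_nonneg _) (Real.rpow_nonneg (abs_nonneg _) _))
      (hfint _ _)
  have step2 : (∫ ξ in (-(r^2))..(r^2), K/(2*r^4) * |ξ| ^ (1-2*H₀))
      ≤ ∫ ξ in (-(r^2))..(r^2), ‖gammaH t ξ r‖ ^ 2 / |ξ| ^ (2*H₀-1) := by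
    apply intervalIntegral.integral_mono_ae_restrict (by linarith)
      ((intervalIntegrable_abs_rpow hp _ _).const_mul _) (hfint _ _)
    filter_upwards [ae_restrict_mem measurableSet_Icc, ae_restrict_of_ae h0ae] with ξ hmem hξ
    have hξ2 : ξ^2 ≤ r^4 := by nlinarith [hmem.1, hmem.2]
    have hd : (0:ℝ) < |ξ| ^ (2*H₀-1) := Real.rpow_pos_of_pos (abs_pos.2 hξ) _
    have key : K/(2*r^4) * |ξ| ^ (1-2*H₀) = (K/(2*r^4)) / |ξ| ^ (2*H₀-1) := by
      rw [div_eq_mul_inv (K/(2*r^4)), ← Real.rpow_neg (abs_nonneg ξ),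
        (by ring : -(2*H₀-1) = 1-2*H₀)]
    rw [key]
    calc (K/(2*r^4)) / |ξ| ^ (2*H₀-1)
        ≤ (K/(r^4+ξ^2)) / |ξ| ^ (2*H₀-1) := by
          gcongr
          nlinarith
      _ ≤ ‖gammaH t ξ r‖ ^ 2 / |ξ| ^ (2*H₀-1) := by
          gcongr
          exact gammaH_sq_ge t ξ r hr ht
  have step3 : (∫ ξ in (-(r^2))..(r^2), K/(2*r^4) * |ξ| ^ (1-2*H₀))
      = 1/(2*(1-H₀)) * (1 / r ^ (4*H₀)) * K := by
    rw [intervalIntegral.integral_const_mul, integral_abs_rpow hp ha0]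
    have e1 : ((r^2:ℝ)) ^ ((1-2*H₀)+1) * r ^ (4*H₀) = r^4 := by
      rw [← Real.rpow_natCast r 2, ← Real.rpow_natCast r 4, ← Real.rpow_mul hr0.le,
        ← Real.rpow_add hr0]
      norm_num
      ring_nf
      exact_mod_cast Real.rpow_natCast r 4
    have hr4 : (0:ℝ) < r^4 := by positivity
    have hX : (0:ℝ) < ((r^2:ℝ)) ^ ((1-2*H₀)+1) := Real.rpow_pos_of_pos (by positivity) _
    have hne1 : (1:ℝ) - H₀ ≠ 0 := by linarith
    have hne2 : (1:ℝ) - 2*H₀ + 1 ≠ 0 := by linarith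
    field_simp
    rw [mul_comm H₀ 4]
    linear_combination (2*(1-H₀)) * e1
  calc 1/(2*(1-H₀)) * (1 / r ^ (4*H₀)) * (1 - 2*Real.exp (-t) + Real.exp (-2*t))
      = 1/(2*(1-H₀)) * (1 / r ^ (4*H₀)) * K := by rw [hEeq]
    _ = ∫ ξ in (-(r^2))..(r^2), K/(2*r^4) * |ξ| ^ (1-2*H₀) := step3.symm
    _ ≤ ∫ ξ in (-(r^2))..(r^2), ‖gammaH t ξ r‖ ^ 2 / |ξ| ^ (2*H₀-1) := step2
    _ ≤ _ := step1
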